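/- Let Θ = ℝ^d, let J_D : Θ → ℝ be L_J-Lipschitz continuous with a maximizer θ*, let Φ be a probability distribution on ℝ^d with mean 0 and E[‖ε‖₂²] ≤ d σ², and define J_P(θ) = E_{ε∼Φ}[J_D(θ + ε)]. If θ*_P is a maximizer of J_P, then J_D(θ*) - J_D(θ*_P) ≤ 2 L_J √d σ. -/

import Mathlib

open MeasureTheory

/-- If `θ*` maximizes the `L_J`-Lipschitz objective `J_D` and `θ*_P` maximizes the smoothed
objective `J_P(θ) = E_{ε∼Φ}[J_D(θ+ε)]` (with zero-mean noise and `E[‖ε‖²] ≤ d σ²`), then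
`J_D(θ*) - J_D(θ*_P) ≤ 2 L_J √d σ`. -/
theorem stmt_4 (d : ℕ) (L σ : ℝ) (hL : 0 ≤ L) (hσ : 0 < σ)
    (JD JP : EuclideanSpace ℝ (Fin d) → ℝ)
    (hLip : ∀ θ θ' : EuclideanSpace ℝ (Fin d), |JD θ - JD θ'| ≤ L * ‖θ - θ'‖)
    (Φ : Measure (EuclideanSpace ℝ (Fin d))) [IsProbabilityMeasure Φ]
    (hmean : (∫ ε, ε ∂Φ) = 0)
    (hint2 : Integrable (fun ε => ‖ε‖ ^ 2) Φ)
    (hvar : (∫ ε, ‖ε‖ ^ 2 ∂Φ) ≤ (d : ℝ) * σ ^ 2)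
    (hintJ : ∀ θ, Integrable (fun ε => JD (θ + ε)) Φ)
    (hJP : ∀ θ, JP θ = ∫ ε, JD (θ + ε) ∂Φ)
    (θstar θP : EuclideanSpace ℝ (Fin d))
    (hθstar : ∀ θ, JD θ ≤ JD θstar)
    (hθP : ∀ θ, JP θ ≤ JP θP) :
    JD θstar - JD θP ≤ 2 * L * Real.sqrt d * σ := by
  -- integrability of the norm
  have hintn : Integrable (fun ε : EuclideanSpace ℝ (Fin d) => ‖ε‖) Φ := by
    refine Integrable.mono' (hint2.add (integrable_const 1))
      continuous_norm.aestronglyMeasurable ?_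
    filter_upwards with ε
    simp only [Pi.add_apply, Real.norm_of_nonneg (norm_nonneg ε)]
    nlinarith [sq_nonneg (‖ε‖ - 1)]
  set m := ∫ ε, ‖ε‖ ∂Φ with hm
  have hm0 : 0 ≤ m := integral_nonneg fun ε => norm_nonneg ε
  -- Cauchy–Schwarz via variance nonnegativity
  have hms : m ^ 2 ≤ ∫ ε, ‖ε‖ ^ 2 ∂Φ := by
    have h0 : 0 ≤ ∫ ε, (‖ε‖ - m) ^ 2 ∂Φ := integral_nonneg fun ε => sq_nonneg _
    have e1 : ∀ ε : EuclideanSpace ℝ (Fin d), (‖ε‖ - m) ^ 2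
        = (‖ε‖ ^ 2 - (2 * m) * ‖ε‖) + m ^ 2 := fun ε => by ring
    simp only [e1] at h0
    have i2 : Integrable (fun ε : EuclideanSpace ℝ (Fin d) => 2 * m * ‖ε‖) Φ := by
      exact hintn.const_mul (2 * m)
    have i1 : Integrable (fun ε : EuclideanSpace ℝ (Fin d) => ‖ε‖ ^ 2 - 2 * m * ‖ε‖) Φ := by
      exact hint2.sub i2
    rw [integral_add i1 (integrable_const _), integral_sub hint2 i2, integral_const_mul,
      integral_const, probReal_univ] at h0
    simp only [ENNReal.toReal_one, smul_eq_mul, one_mul] at h0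
    nlinarith
  have hmsd : m ≤ Real.sqrt d * σ := by
    have hs : (Real.sqrt d * σ) ^ 2 = (d : ℝ) * σ ^ 2 := by
      rw [mul_pow, Real.sq_sqrt (Nat.cast_nonneg d)]
    refine le_of_pow_le_pow_left₀ two_ne_zero (by positivity) ?_
    rw [hs]; exact hms.trans hvar
  -- uniform gap bound
  have gap : ∀ θ, |JD θ - JP θ| ≤ L * (Real.sqrt d * σ) := by
    intro θ
    rw [hJP θ]
    have e2 : JD θ - ∫ ε, JD (θ + ε) ∂Φ = ∫ ε, (JD θ - JD (θ + ε)) ∂Φ := by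
      rw [integral_sub (integrable_const _) (hintJ θ), integral_const, probReal_univ]
      simp
    rw [e2]
    calc |∫ ε, (JD θ - JD (θ + ε)) ∂Φ| ≤ ∫ ε, |JD θ - JD (θ + ε)| ∂Φ := by
          simpa [Real.norm_eq_abs] using
            norm_integral_le_integral_norm (fun ε => JD θ - JD (θ + ε)) (μ := Φ)
      _ ≤ ∫ ε, L * ‖ε‖ ∂Φ := by
          refine integral_mono ((integrable_const _).sub (hintJ θ)).abs (hintn.const_mul L) ?_
          intro ε
          have h := hLip θ (θ + ε)
          have hsub : θ - (θ + ε) = -ε := by abel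
          rwa [hsub, norm_neg] at h
      _ = L * m := integral_const_mul L _
      _ ≤ L * (Real.sqrt d * σ) := mul_le_mul_of_nonneg_left hmsd hL
  have g1 := abs_le.mp (gap θstar)
  have g2 := abs_le.mp (gap θP)
  have h3 := hθP θstar
  nlinarith [g1.1, g1.2, g2.1, g2.2]
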